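/- Let K be a complex Hilbert space and μ : K → ℝ a continuous function with μ(ξ) ≥ 0 for all ξ, satisfying the parallelogram identity μ(ξ+η) + μ(ξ−η) = 2μ(ξ) + 2μ(η) and μ(−ξ) = μ(ξ), μ(iξ) = μ(ξ) for all ξ, η ∈ K. Then there exists a bounded positive operator M on K with μ(ξ) = ⟨ξ, Mξ⟩ for all ξ ∈ K. -/

import Mathlib

theorem stmt18 {K : Type*} [NormedAddCommGroup K] [InnerProductSpace ℂ K] [CompleteSpace K]
    (μ : K → ℝ) (hcont : Continuous μ) (hnonneg : ∀ ξ : K, 0 ≤ μ ξ)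
    (hpar : ∀ ξ η : K, μ (ξ + η) + μ (ξ - η) = 2 * μ ξ + 2 * μ η)
    (hneg : ∀ ξ : K, μ (-ξ) = μ ξ)
    (hi : ∀ ξ : K, μ (Complex.I • ξ) = μ ξ) :
    ∃ M : K →L[ℂ] K, (∀ ξ : K, 0 ≤ (inner ℂ ξ (M ξ) : ℂ).re ∧ (inner ℂ ξ (M ξ) : ℂ).im = 0) ∧
      ∀ ξ : K, (inner ℂ ξ (M ξ) : ℂ) = (μ ξ : ℂ) := by
  classical
  have hμ0 : μ 0 = 0 := by
    have h := hpar 0 0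
    simp only [add_zero, sub_zero] at h
    linarith
  set Q : K → K → ℝ := fun x y => (μ (x + y) - μ (x - y)) / 4 with hQdef
  have hQsymm : ∀ x y, Q x y = Q y x := by
    intro x y
    have h1 : μ (x + y) = μ (y + x) := by rw [add_comm]
    have h2 : μ (x - y) = μ (y - x) := by
      rw [← hneg (x - y), neg_sub]
    simp only [hQdef, h1, h2]
  have hQ0 : ∀ x, Q x 0 = 0 := by
    intro x; simp [hQdef]
  have hJ : ∀ x y z, Q x (y + z) + Q x (y - z) = 2 * Q x y := by
    intro x y z
    have h1 := hpar (x + y) z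
    have h2 := hpar (x - y) z
    have e1 : x + (y + z) = x + y + z := by abel
    have e2 : x - (y + z) = x - y - z := by abel
    have e3 : x + (y - z) = x + y - z := by abel
    have e4 : x - (y - z) = x - y + z := by abel
    simp only [hQdef, e1, e2, e3, e4]
    linarith
  have hQdouble : ∀ x w, Q x (w + w) = 2 * Q x w := by
    intro x w
    have h := hJ x w w
    rw [sub_self, hQ0] at h
    linarith
  have hQadd : ∀ x a b, Q x (a + b) = Q x a + Q x b := by
    intro x a b
    have h := hJ x ((2:ℝ)⁻¹ • (a + b)) ((2:ℝ)⁻¹ • (a - b))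
    have e1 : (2:ℝ)⁻¹ • (a + b) + (2:ℝ)⁻¹ • (a - b) = a := by module
    have e2 : (2:ℝ)⁻¹ • (a + b) - (2:ℝ)⁻¹ • (a - b) = b := by module
    have e3 : (2:ℝ)⁻¹ • (a + b) + (2:ℝ)⁻¹ • (a + b) = a + b := by module
    have h2 := hQdouble x ((2:ℝ)⁻¹ • (a + b))
    rw [e3] at h2
    rw [e1, e2] at h
    linarith
  have hQcont : ∀ x, Continuous (Q x) := by
    intro x
    simp only [hQdef]
    exact ((hcont.comp (continuous_add_left x)).sub
      (hcont.comp (continuous_sub_left x))).div_const 4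
  have hQsmul : ∀ x (r : ℝ) y, Q x (r • y) = r * Q x y := by
    intro x r y
    have h := map_real_smul (AddMonoidHom.mk' (Q x) (hQadd x)) (hQcont x) r y
    simpa [smul_eq_mul] using h
  have hQneg : ∀ x y, Q x (-y) = - Q x y := by
    intro x y
    have h := hQadd x y (-y)
    rw [add_neg_cancel, hQ0] at h
    linarith
  have hQself : ∀ x, Q x x = μ x := by
    intro x
    have h := hpar x x
    rw [sub_self, hμ0] at h
    simp only [hQdef, sub_self, hμ0]
    linarith
  have hQI : ∀ x y, Q x (Complex.I • y) = - Q (Complex.I • x) y := by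
    intro x y
    have e1 : Complex.I • (x + Complex.I • y) = Complex.I • x - y := by
      rw [smul_add, smul_smul, Complex.I_mul_I, neg_one_smul, ← sub_eq_add_neg]
    have e2 : Complex.I • (x - Complex.I • y) = Complex.I • x + y := by
      rw [smul_sub, smul_smul, Complex.I_mul_I, neg_one_smul, sub_neg_eq_add]
    have h1 : μ (x + Complex.I • y) = μ (Complex.I • x - y) := by
      rw [← hi (x + Complex.I • y), e1]
    have h2 : μ (x - Complex.I • y) = μ (Complex.I • x + y) := by
      rw [← hi (x - Complex.I • y), e2]
    simp only [hQdef, h1, h2]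
    ring
  have hQIself : ∀ x, Q x (Complex.I • x) = 0 := by
    intro x
    have h := hQI x x
    rw [hQsymm (Complex.I • x) x] at h
    linarith
  -- the sesquilinear form
  set B : K → K → ℂ := fun x y =>
    (Q x y : ℂ) - Complex.I * (Q x (Complex.I • y) : ℂ) with hBdef
  have hBself : ∀ x, B x x = (μ x : ℂ) := by
    intro x
    simp [hBdef, hQIself x, hQself x]
  have hQanti : ∀ x y, Q y (Complex.I • x) = - Q x (Complex.I • y) := by
    intro x y
    rw [hQI y x, hQsymm (Complex.I • y) x]
  have hconj : ∀ x y, (starRingEnd ℂ) (B y x) = B x y := by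
    intro x y
    simp only [hBdef, map_sub, map_mul, Complex.conj_I, Complex.conj_ofReal]
    rw [hQsymm y x, hQanti x y]
    push_cast
    ring
  have hBaddr : ∀ x a b, B x (a + b) = B x a + B x b := by
    intro x a b
    simp only [hBdef, smul_add, hQadd]
    push_cast
    ring
  have hBsmulR : ∀ x (r : ℝ) y, B x (r • y) = (r : ℂ) * B x y := by
    intro x r y
    have e : Complex.I • (r • y) = r • (Complex.I • y) := smul_comm _ _ _
    simp only [hBdef, e, hQsmul]
    push_cast
    ring
  have hBsmulI : ∀ x y, B x (Complex.I • y) = Complex.I * B x y := by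
    intro x y
    have e : Complex.I • (Complex.I • y) = -y := by
      rw [smul_smul, Complex.I_mul_I, neg_one_smul]
    simp only [hBdef, e, hQneg]
    push_cast
    linear_combination ((Q x (Complex.I • y) : ℂ)) * Complex.I_mul_I
  have hBsmulr : ∀ x (c : ℂ) y, B x (c • y) = c * B x y := by
    intro x c y
    have hdec : c • y = (c.re : ℝ) • y + (c.im : ℝ) • (Complex.I • y) := by
      rw [← Complex.coe_smul, ← Complex.coe_smul, smul_smul, ← add_smul]
      congr 1
      exact (Complex.re_add_im c).symm
    rw [hdec, hBaddr, hBsmulR, hBsmulR, hBsmulI]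
    linear_combination (B x y) * (Complex.re_add_im c)
  have hBaddl : ∀ a b y, B (a + b) y = B a y + B b y := by
    intro a b y
    rw [← hconj (a + b) y, hBaddr, map_add, hconj a y, hconj b y]
  have hBsmull : ∀ (c : ℂ) x y, B (c • x) y = (starRingEnd ℂ) c * B x y := by
    intro c x y
    rw [← hconj (c • x) y, hBsmulr, map_mul, hconj x y]
  -- positive semidefinite hermitian core, for Cauchy–Schwarz
  let core : PreInnerProductSpace.Core ℂ K :=
    { inner := B
      conj_inner_symm := hconj
      re_inner_nonneg := fun x => by
        show 0 ≤ RCLike.re (B x x)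
        rw [hBself x]
        simpa using hnonneg x
      add_left := fun a b y => hBaddl a b y
      smul_left := fun x y c => hBsmull c x y }
  have cs : ∀ x y, ‖B x y‖ * ‖B y x‖ ≤ μ x * μ y := by
    intro x y
    have h : ‖B x y‖ * ‖B y x‖ ≤ RCLike.re (B x x) * RCLike.re (B y y) :=
      InnerProductSpace.Core.inner_mul_inner_self_le (𝕜 := ℂ) (c := core) x y
    have hx : RCLike.re (B x x) = μ x := by rw [hBself x]; simp
    have hy : RCLike.re (B y y) = μ y := by rw [hBself y]; simp
    rwa [hx, hy] at h
  have hBconjnorm : ∀ x y, ‖B y x‖ = ‖B x y‖ := by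
    intro x y
    rw [← hconj x y]
    exact (RCLike.norm_conj _).symm
  -- quadratic homogeneity and the growth bound
  have hquad : ∀ (r : ℝ) (x : K), μ (r • x) = r ^ 2 * μ x := by
    intro r x
    have h1 : Q (r • x) (r • x) = μ (r • x) := hQself _
    have h2 : Q (r • x) (r • x) = r * Q (r • x) x := hQsmul _ r x
    rw [hQsymm (r • x) x, hQsmul x r x, hQself x] at h2
    rw [← h1, h2]; ring
  obtain ⟨δ, hδ, hsmall⟩ : ∃ δ > 0, ∀ x : K, ‖x‖ < δ → μ x < 1 := by
    obtain ⟨δ, hδ, h⟩ := Metric.continuousAt_iff.mp hcont.continuousAt 1 one_pos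
    refine ⟨δ, hδ, fun x hx => ?_⟩
    have := h (x := x) (by rwa [dist_zero_right])
    rw [Real.dist_eq, hμ0, sub_zero, abs_of_nonneg (hnonneg x)] at this
    exact this
  set C : ℝ := 4 / δ ^ 2 with hCdef
  have hC0 : 0 ≤ C := by positivity
  have hμbound : ∀ x : K, μ x ≤ C * ‖x‖ ^ 2 := by
    intro x
    rcases eq_or_ne x 0 with rfl | hx
    · simp [hμ0]
    · have hxn : 0 < ‖x‖ := norm_pos_iff.2 hx
      set r : ℝ := δ / (2 * ‖x‖) with hrdef
      have hr : 0 < r := by positivity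
      have hrx : ‖r • x‖ < δ := by
        rw [norm_smul, Real.norm_eq_abs, abs_of_pos hr, hrdef]
        rw [div_mul_eq_mul_div, div_lt_iff₀ (by positivity)]
        nlinarith
      have h1 := hsmall _ hrx
      rw [hquad r x] at h1
      have hr2 : r ^ 2 = δ ^ 2 / (4 * ‖x‖ ^ 2) := by
        rw [hrdef, div_pow]; ring
      rw [hr2] at h1
      rw [hCdef, div_mul_eq_mul_div, le_div_iff₀ (by positivity)]
      rw [div_mul_eq_mul_div, div_lt_one (by positivity)] at h1
      nlinarith
  have hBnorm : ∀ x y, ‖B x y‖ ≤ C * ‖x‖ * ‖y‖ := by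
    intro x y
    have h1 : ‖B x y‖ ^ 2 ≤ μ x * μ y := by
      have := cs x y
      rw [hBconjnorm x y] at this
      nlinarith [norm_nonneg (B x y)]
    have h2 : μ x * μ y ≤ (C * ‖x‖ * ‖y‖) ^ 2 := by
      have hbx := hμbound x
      have hby := hμbound y
      nlinarith [hnonneg x, hnonneg y, norm_nonneg x, norm_nonneg y,
        mul_le_mul hbx hby (hnonneg y) (by positivity)]
    have h3 := Real.sqrt_le_sqrt (h1.trans h2)
    rwa [Real.sqrt_sq (norm_nonneg _), Real.sqrt_sq (by positivity)] at h3
  -- package as a continuous sesquilinear map and apply Riesz representation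
  let Bsl : K →ₗ⋆[ℂ] K →ₗ[ℂ] ℂ :=
    LinearMap.mk₂'ₛₗ (starRingEnd ℂ) (RingHom.id ℂ) B hBaddl
      (fun c x y => by rw [hBsmull c x y]; rfl) hBaddr
      (fun c x y => by rw [hBsmulr x c y]; rfl)
  let Bc : K →L⋆[ℂ] K →L[ℂ] ℂ := LinearMap.mkContinuous₂ Bsl C hBnorm
  set M : K →L[ℂ] K := InnerProductSpace.continuousLinearMapOfBilin Bc with hMdef
  have hM : ∀ ξ : K, (inner ℂ ξ (M ξ) : ℂ) = (μ ξ : ℂ) := by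
    intro ξ
    have h1 : (inner ℂ (M ξ) ξ : ℂ) = Bc ξ ξ :=
      InnerProductSpace.continuousLinearMapOfBilin_apply (𝕜 := ℂ) Bc ξ ξ
    have h2 : Bc ξ ξ = B ξ ξ := rfl
    have h3 : (inner ℂ ξ (M ξ) : ℂ) = (starRingEnd ℂ) (inner ℂ (M ξ) ξ : ℂ) :=
      (inner_conj_symm _ _).symm
    rw [h3, h1, h2, hBself ξ, Complex.conj_ofReal]
  refine ⟨M, fun ξ => ?_, hM⟩
  rw [hM ξ]
  exact ⟨by simpa using hnonneg ξ, by simp⟩
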